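/- The Laplace mechanism adding noise drawn from Laplace(0, s/ε) to a real-valued function f with sensitivity s satisfies (ε, 0)-differential privacy. -/
import Mathlib


open MeasureTheory
open scoped ENNReal

/-- The mean-zero Laplace distribution with scale `b`, with density
`(1/(2b))·exp(−|x|/b)` with respect to Lebesgue measure. -/
noncomputable def laplaceMeasure (b : ℝ) : Measure ℝ :=
  volume.withDensity (fun x => ENNReal.ofReal ((1 / (2 * b)) * Real.exp (-|x| / b)))

/-- the Laplace mechanism `d ↦ f(d) + Z` with `Z ∼ Laplace(0, s/ε)`
applied to a function `f` of sensitivity `s` satisfies `(ε, 0)`-differential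
privacy. -/
theorem laplace_mechanism_dp {D : Type*}
    (Neighbor : D → D → Prop) (f : D → ℝ) (s ε : ℝ) (hs : 0 < s) (hε : 0 < ε)
    (hsens : ∀ d d', Neighbor d d' → |f d - f d'| ≤ s) :
    ∀ d d', Neighbor d d' → ∀ S : Set ℝ, MeasurableSet S →
      (laplaceMeasure (s / ε)).map (fun z => f d + z) S ≤
        ENNReal.ofReal (Real.exp ε) *
          (laplaceMeasure (s / ε)).map (fun z => f d' + z) S := by
  intro d d' hnb S hS
  set b := s / ε with hb
  have hb0 : 0 < b := div_pos hs hε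
  set g : ℝ → ℝ≥0∞ := fun x => ENNReal.ofReal ((1 / (2 * b)) * Real.exp (-|x| / b))
    with hg
  have hgm : Measurable g := by
    apply Measurable.ennreal_ofReal
    exact measurable_const.mul (((measurable_abs.neg).div_const b).exp)
  set t := f d - f d' with ht
  have hts : |t| ≤ s := hsens d d' hnb
  have key : ∀ x : ℝ, g (x - t) ≤ ENNReal.ofReal (Real.exp ε) * g x := by
    intro x
    rw [hg]
    simp only
    rw [← ENNReal.ofReal_mul (Real.exp_nonneg ε)]
    apply ENNReal.ofReal_le_ofReal
    have h1 : (0:ℝ) ≤ 1 / (2 * b) := by positivity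
    rw [show Real.exp ε * (1 / (2 * b) * Real.exp (-|x| / b))
        = 1 / (2 * b) * (Real.exp ε * Real.exp (-|x| / b)) by ring,
      ← Real.exp_add]
    apply mul_le_mul_of_nonneg_left _ h1
    apply Real.exp_le_exp.mpr
    have habs : |x| - |x - t| ≤ |t| := by
      have := abs_sub_abs_le_abs_sub x (x - t)
      simpa using this
    have hnum : -|x - t| ≤ s - |x| := by linarith
    have hsb : s / b = ε := by rw [hb]; field_simp
    have hdiv : -|x - t| / b ≤ (s - |x|) / b := by gcongr
    have : (s - |x|) / b = ε - |x| / b := by rw [sub_div, hsb]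
    rw [this] at hdiv
    have : -|x| / b = -(|x| / b) := by ring
    rw [this]
    linarith
  have h1 : Measurable (fun z : ℝ => f d + z) := measurable_const_add _
  have h2 : Measurable (fun z : ℝ => f d' + z) := measurable_const_add _
  set T : Set ℝ := (fun z : ℝ => f d + z) ⁻¹' S with hT
  set T' : Set ℝ := (fun z : ℝ => f d' + z) ⁻¹' S with hT'
  have hTm : MeasurableSet T := h1 hS
  have hT'm : MeasurableSet T' := h2 hS
  rw [Measure.map_apply h1 hS, Measure.map_apply h2 hS]
  rw [laplaceMeasure, withDensity_apply _ hTm, withDensity_apply _ hT'm]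
  have hmem : ∀ x : ℝ, x - t ∈ T ↔ x ∈ T' := by
    intro x
    simp only [hT, hT', Set.mem_preimage]
    rw [show f d + (x - t) = f d' + x from by rw [ht]; ring]
  calc ∫⁻ x in T, g x ∂volume
      = ∫⁻ x, T.indicator g x ∂volume := (lintegral_indicator hTm g).symm
    _ = ∫⁻ x, T.indicator g (x - t) ∂volume :=
        (lintegral_sub_right_eq_self (fun x => T.indicator g x) t).symm
    _ = ∫⁻ x, T'.indicator (fun y => g (y - t)) x ∂volume := by
        congr 1; funext x
        by_cases hx : x ∈ T'
        · rw [Set.indicator_of_mem hx, Set.indicator_of_mem ((hmem x).mpr hx)]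
        · rw [Set.indicator_of_notMem hx,
            Set.indicator_of_notMem (fun h => hx ((hmem x).mp h))]
    _ ≤ ∫⁻ x, T'.indicator (fun y => ENNReal.ofReal (Real.exp ε) * g y) x ∂volume := by
        apply lintegral_mono
        intro x
        exact Set.indicator_le_indicator' (fun _ => key x)
    _ = ∫⁻ x in T', ENNReal.ofReal (Real.exp ε) * g x ∂volume :=
        lintegral_indicator hT'm _
    _ = ENNReal.ofReal (Real.exp ε) * ∫⁻ x in T', g x ∂volume :=
        lintegral_const_mul _ hgm
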